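/- Let f be a bounded holomorphic function on the open unit disk 𝔻 with 1 < |f(λ)| ≤ √2 for all λ ∈ 𝔻. Then both kernels K₁(λ, z) = (2·conj(f(λ))·f(z) − conj(f(λ))²·f(z)²) / (1 − conj(λ)·z)² and K₂(λ, z) = (1 − 2·conj(f(λ))·f(z) + conj(f(λ))²·f(z)²) / (1 − conj(λ)·z)² are positive semi-definite on 𝔻. -/

import Mathlib

open Complex Metric ComplexOrder

open intervalIntegral Finset Filter Topology

local notation "conj'" => starRingEnd ℂ

/-- A kernel `K` on the open unit disk is positive semi-definite if for every finite
family of points in the disk and complex coefficients, the associated quadratic form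
is a nonnegative real number (using the partial order on `ℂ`). -/
def IsPSDKernelOnDisk (K : ℂ → ℂ → ℂ) : Prop :=
  ∀ (n : ℕ) (lam : Fin n → ℂ), (∀ i, ‖lam i‖ < 1) →
    ∀ c : Fin n → ℂ,
      0 ≤ ∑ i, ∑ j, (starRingEnd ℂ) (c i) * c j * K (lam i) (lam j)

lemma circle_rep {H : ℂ → ℂ} {s ρ : ℝ} (hρ0 : 0 < ρ) (hρs : ρ < s)
    (hH : DifferentiableOn ℂ H (ball 0 s)) {a : ℂ} (ha : ‖a‖ * ρ < 1) :
    (∫ θ in (0:ℝ)..(2*Real.pi), conj' ((1 - a * circleMap 0 ρ θ)⁻¹) * H (circleMap 0 ρ θ))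
      = (2*Real.pi : ℝ) * H ((ρ:ℂ)^2 * conj' a) := by
  set w : ℂ := (ρ:ℂ)^2 * conj' a with hw_def
  have habs_w : ‖w‖ = ρ^2 * ‖a‖ := by
    rw [hw_def, norm_mul, norm_pow, Complex.norm_real, Real.norm_eq_abs, Complex.norm_conj, abs_of_pos hρ0]
  have hwρ : ‖w‖ < ρ := by
    rw [habs_w]; nlinarith [norm_nonneg a]
  have hw : w ∈ ball (0:ℂ) ρ := by
    simpa [mem_ball_zero_iff] using hwρ
  have hd : DiffContOnCl ℂ H (ball 0 ρ) := by
    refine ⟨hH.mono (ball_subset_ball hρs.le), hH.continuousOn.mono ?_⟩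
    rw [closure_ball (0:ℂ) hρ0.ne']
    exact closedBall_subset_ball hρs
  have key := hd.circleIntegral_sub_inv_smul hw
  rw [circleIntegral] at key
  simp only [deriv_circleMap, smul_eq_mul] at key
  have hptwise : ∀ θ : ℝ,
      circleMap 0 ρ θ * I * ((circleMap 0 ρ θ - w)⁻¹ * H (circleMap 0 ρ θ))
        = I * (conj' ((1 - a * circleMap 0 ρ θ)⁻¹) * H (circleMap 0 ρ θ)) := by
    intro θ
    set z := circleMap 0 ρ θ with hz_def
    have hzabs : ‖z‖ = ρ := by
      rw [hz_def, norm_circleMap_zero, abs_of_pos hρ0]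
    have hz0 : z ≠ 0 := by
      intro h; rw [h] at hzabs; simp at hzabs; exact hρ0.ne' hzabs.symm
    have hzw : z - w ≠ 0 := by
      intro h
      have : z = w := by linear_combination h
      rw [← this, hzabs] at hwρ; exact lt_irrefl _ hwρ
    have haz : (1 : ℂ) - a * z ≠ 0 := by
      intro h
      have h1 : ‖a * z‖ < 1 := by rw [norm_mul, hzabs]; exact ha
      have h2 : a * z = 1 := by linear_combination -h
      rw [h2] at h1; simp at h1
    have hzz : conj' z * z = ((ρ:ℂ))^2 := by
      rw [mul_comm, Complex.mul_conj, Complex.normSq_eq_norm_sq, hzabs]; push_cast; ring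
    have h1 : conj' (1 - a * z) * z = z - w := by
      rw [hw_def, map_sub, map_one, map_mul]
      linear_combination (-(conj' a)) * hzz
    have hkey : conj' ((1 - a * z)⁻¹) = z * (z - w)⁻¹ := by
      rw [map_inv₀, ← h1, mul_inv, mul_comm ((conj' (1 - a * z))⁻¹), ← mul_assoc,
        mul_inv_cancel₀ hz0, one_mul]
    rw [hkey]; ring
  rw [intervalIntegral.integral_congr (g := fun θ =>
      I * (conj' ((1 - a * circleMap 0 ρ θ)⁻¹) * H (circleMap 0 ρ θ))) (fun θ _ => hptwise θ),
    intervalIntegral.integral_const_mul] at key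
  have key2 : I * (∫ θ in (0:ℝ)..(2*Real.pi), conj' ((1 - a * circleMap 0 ρ θ)⁻¹)
      * H (circleMap 0 ρ θ)) = I * (((2*Real.pi : ℝ):ℂ) * H w) := by
    rw [key]; push_cast; ring
  exact mul_left_cancel₀ I_ne_zero key2


section Pick
variable {g : ℂ → ℂ} {n : ℕ} {lam : Fin n → ℂ} {c : Fin n → ℂ}

lemma pick_form (hg : DifferentiableOn ℂ g (ball 0 1))
    (hg1 : ∀ z ∈ ball (0:ℂ) 1, ‖g z‖ ≤ 1)
    (hlam : ∀ i, ‖lam i‖ < 1) :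
    0 ≤ ∑ i, ∑ j, conj' (c i) * c j *
      ((1 - conj' (g (lam i)) * g (lam j)) / (1 - conj' (lam i) * lam j)) := by
  -- radius bound
  obtain ⟨r, hr0, hr1, hrlam⟩ : ∃ r : ℝ, 0 ≤ r ∧ r < 1 ∧ ∀ i, ‖lam i‖ ≤ r := by
    set R : NNReal := Finset.univ.sup (fun i => ‖lam i‖₊) with hR
    refine ⟨(R : ℝ), R.coe_nonneg, ?_, ?_⟩
    · rw [← NNReal.coe_one, NNReal.coe_lt_coe, hR]
      refine Finset.sup_lt_iff (by norm_num) |>.2 fun i _ => ?_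
      have := hlam i
      exact_mod_cast this
    · intro i
      have : ‖lam i‖₊ ≤ R := hR ▸ Finset.le_sup (f := fun i => ‖lam i‖₊) (Finset.mem_univ i)
      exact_mod_cast this
  set s : ℝ := 2 / (1 + r) with hs_def
  have hs1 : 1 < s := by
    rw [hs_def, lt_div_iff₀ (by linarith)]; linarith
  have hrs : r * s < 1 := by
    rw [hs_def, mul_div_assoc', div_lt_one (by linarith)]; linarith
  -- denominators don't vanish
  have hden : ∀ (i : Fin n) (w : ℂ), w ∈ ball (0:ℂ) s → (1 : ℂ) - conj' (lam i) * w ≠ 0 := by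
    intro i w hw h
    rw [mem_ball_zero_iff] at hw
    have h1 : ‖conj' (lam i) * w‖ < 1 := by
      rw [norm_mul, Complex.norm_conj]
      calc ‖lam i‖ * ‖w‖ ≤ r * ‖w‖ := by
            apply mul_le_mul_of_nonneg_right (hrlam i) (norm_nonneg w)
      _ < 1 := by
        rcases eq_or_lt_of_le hr0 with h0 | h0
        · rw [← h0]; norm_num
        · calc r * ‖w‖ < r * s := by exact mul_lt_mul_of_pos_left hw h0
          _ < 1 := hrs
    have h2 : conj' (lam i) * w = 1 := by linear_combination -h
    rw [h2] at h1; simp at h1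
  have hball1s : ball (0:ℂ) 1 ⊆ ball 0 s := ball_subset_ball hs1.le
  have hlam_mem : ∀ i, lam i ∈ ball (0:ℂ) 1 := fun i => by
    rw [mem_ball_zero_iff]; exact hlam i
  -- the auxiliary functions
  set Fc : ℂ → ℂ := fun w => ∑ i, conj' (c i) * (1 - conj' (lam i) * w)⁻¹ with hFc_def
  set Fg : ℂ → ℂ := fun w => ∑ i, conj' (c i * g (lam i)) * (1 - conj' (lam i) * w)⁻¹ with hFg_def
  have hinv_diff : ∀ i : Fin n,
      DifferentiableOn ℂ (fun w : ℂ => (1 - conj' (lam i) * w)⁻¹) (ball 0 s) := fun i =>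
    DifferentiableOn.inv
      ((differentiableOn_const _).sub ((differentiableOn_const _).mul differentiableOn_id))
      (fun w hw => hden i w hw)
  have hFc_diff : DifferentiableOn ℂ Fc (ball 0 s) :=
    DifferentiableOn.fun_sum fun i _ => (hinv_diff i).const_mul _
  have hFg_diff : DifferentiableOn ℂ Fg (ball 0 s) :=
    DifferentiableOn.fun_sum fun i _ => (hinv_diff i).const_mul _
  have hH_diff : DifferentiableOn ℂ (fun w => g w * Fg w) (ball 0 1) :=
    hg.mul (hFg_diff.mono hball1s)
  -- the representation formula
  have rep : ∀ (ρ : ℝ), 0 < ρ → ρ ≤ 1 → ∀ (d : Fin n → ℂ) (H : ℂ → ℂ) (s' : ℝ), ρ < s' → s' ≤ s →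
      DifferentiableOn ℂ H (ball 0 s') → ∀ P : ℂ → ℂ,
      (∀ w, P w = ∑ i, d i * (1 - conj' (lam i) * w)⁻¹) →
      (∫ θ in (0:ℝ)..(2*Real.pi),
          conj' (P (circleMap 0 ρ θ)) * H (circleMap 0 ρ θ))
        = (2*Real.pi:ℝ) * ∑ i, conj' (d i) * H ((ρ:ℂ)^2 * lam i) := by
    intro ρ hρ0 hρ1 d H s' hρs' hs's hH P hP
    simp only [hP]
    have hcm : ∀ θ : ℝ, circleMap 0 ρ θ ∈ ball (0:ℂ) s' := by
      intro θ
      rw [mem_ball_zero_iff, norm_circleMap_zero, abs_of_pos hρ0]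
      exact hρs'
    have hne : ∀ (i : Fin n) (θ : ℝ), (1:ℂ) - conj' (lam i) * circleMap 0 ρ θ ≠ 0 :=
      fun i θ => hden i _ (Set.mem_of_mem_of_subset (hcm θ) (ball_subset_ball hs's))
    have hpt : ∀ θ : ℝ, conj' (∑ i, d i * (1 - conj' (lam i) * circleMap 0 ρ θ)⁻¹)
          * H (circleMap 0 ρ θ)
        = ∑ i, conj' (d i)
            * (conj' ((1 - conj' (lam i) * circleMap 0 ρ θ)⁻¹) * H (circleMap 0 ρ θ)) := by
      intro θ
      rw [map_sum, Finset.sum_mul]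
      exact Finset.sum_congr rfl fun i _ => by rw [map_mul]; ring
    have hHcont : Continuous fun θ : ℝ => H (circleMap 0 ρ θ) :=
      hH.continuousOn.comp_continuous (continuous_circleMap 0 ρ) hcm
    have hint : ∀ i : Fin n, IntervalIntegrable (fun θ : ℝ =>
        conj' (d i) * (conj' ((1 - conj' (lam i) * circleMap 0 ρ θ)⁻¹) * H (circleMap 0 ρ θ)))
        MeasureTheory.volume 0 (2*Real.pi) := by
      intro i
      apply Continuous.intervalIntegrable
      apply Continuous.mul continuous_const
      apply Continuous.mul _ hHcont
      apply Continuous.star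
      exact ((continuous_const.sub (continuous_const.mul (continuous_circleMap 0 ρ))).inv₀
        (hne i))
    rw [intervalIntegral.integral_congr (fun θ _ => hpt θ),
      intervalIntegral.integral_finset_sum (fun i _ => hint i), Finset.mul_sum]
    refine Finset.sum_congr rfl fun i _ => ?_
    have ha : ‖conj' (lam i)‖ * ρ < 1 := by
      rw [Complex.norm_conj]
      nlinarith [hlam i, norm_nonneg (lam i)]
    rw [intervalIntegral.integral_const_mul,
      circle_rep hρ0 hρs' hH ha]
    rw [Complex.conj_conj]
    push_cast
    ring
  -- instances of the representation formula
  have hDc := rep 1 one_pos le_rfl (fun i => conj' (c i)) Fc s hs1 le_rfl hFc_diff Fc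
    (fun w => rfl)
  have hNc := rep 1 one_pos le_rfl (fun i => conj' (c i * g (lam i))) Fg s hs1 le_rfl hFg_diff Fg
    (fun w => rfl)
  simp only [Complex.conj_conj, Complex.ofReal_one, one_pow, one_mul] at hDc hNc
  have hX : ∀ ρ : ℝ, 0 < ρ → ρ < 1 →
      (∫ θ in (0:ℝ)..(2*Real.pi), conj' (Fc (circleMap 0 ρ θ))
        * (g (circleMap 0 ρ θ) * Fg (circleMap 0 ρ θ)))
      = (2*Real.pi:ℝ) * ∑ i, c i * (g ((ρ:ℂ)^2 * lam i) * Fg ((ρ:ℂ)^2 * lam i)) := by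
    intro ρ h0 h1
    have := rep ρ h0 h1.le (fun i => conj' (c i)) (fun w => g w * Fg w) 1 h1 hs1.le hH_diff Fc
      (fun w => rfl)
    simpa only [Complex.conj_conj] using this
  -- real-valued integrals
  set D : ℝ → ℝ := fun ρ => ∫ θ in (0:ℝ)..(2*Real.pi), Complex.normSq (Fc (circleMap 0 ρ θ))
    with hD_def
  set N : ℝ → ℝ := fun ρ => ∫ θ in (0:ℝ)..(2*Real.pi), Complex.normSq (Fg (circleMap 0 ρ θ))
    with hN_def
  have hsub1s : closedBall (0:ℂ) 1 ⊆ ball 0 s := closedBall_subset_ball hs1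
  have hmem_s : ∀ (ρ : ℝ), 0 < ρ → ρ ≤ 1 → ∀ θ : ℝ, circleMap 0 ρ θ ∈ closedBall (0:ℂ) 1 := by
    intro ρ h0 h1 θ
    rw [mem_closedBall_zero_iff, norm_circleMap_zero, abs_of_pos h0]
    exact h1
  have hmem_1 : ∀ (ρ : ℝ), 0 < ρ → ρ < 1 → ∀ θ : ℝ, circleMap 0 ρ θ ∈ ball (0:ℂ) 1 := by
    intro ρ h0 h1 θ
    rw [mem_ball_zero_iff, norm_circleMap_zero, abs_of_pos h0]
    exact h1
  have hFc_cont : ContinuousOn Fc (ball 0 s) := hFc_diff.continuousOn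
  have hFg_cont : ContinuousOn Fg (ball 0 s) := hFg_diff.continuousOn
  have hFc_circ : ∀ (ρ : ℝ), 0 < ρ → ρ ≤ 1 → Continuous fun θ : ℝ => Fc (circleMap 0 ρ θ) :=
    fun ρ h0 h1 => hFc_cont.comp_continuous (continuous_circleMap 0 ρ)
      (fun θ => hsub1s (hmem_s ρ h0 h1 θ))
  have hFg_circ : ∀ (ρ : ℝ), 0 < ρ → ρ ≤ 1 → Continuous fun θ : ℝ => Fg (circleMap 0 ρ θ) :=
    fun ρ h0 h1 => hFg_cont.comp_continuous (continuous_circleMap 0 ρ)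
      (fun θ => hsub1s (hmem_s ρ h0 h1 θ))
  have hg_circ : ∀ (ρ : ℝ), 0 < ρ → ρ < 1 → Continuous fun θ : ℝ => g (circleMap 0 ρ θ) :=
    fun ρ h0 h1 => hg.continuousOn.comp_continuous (continuous_circleMap 0 ρ)
      (fun θ => hmem_1 ρ h0 h1 θ)
  -- the key inequality at radius ρ < 1
  have key_ineq : ∀ ρ : ℝ, 0 < ρ → ρ < 1 →
      0 ≤ D ρ - 2 * ((2*Real.pi:ℝ) * ∑ i, c i * (g ((ρ:ℂ)^2 * lam i)
          * Fg ((ρ:ℂ)^2 * lam i))).re + N ρ := by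
    intro ρ h0 h1
    rw [← hX ρ h0 h1]
    set u : ℝ → ℂ := fun θ => Fc (circleMap 0 ρ θ) with hu_def
    set v : ℝ → ℂ := fun θ => g (circleMap 0 ρ θ) * Fg (circleMap 0 ρ θ) with hv_def
    have hu_cont : Continuous u := hFc_circ ρ h0 h1.le
    have hv_cont : Continuous v := (hg_circ ρ h0 h1).mul (hFg_circ ρ h0 h1.le)
    have hcv_int : IntervalIntegrable (fun θ => conj' (u θ) * v θ)
        MeasureTheory.volume 0 (2*Real.pi) :=
      ((hu_cont.star).mul hv_cont).intervalIntegrable _ _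
    have hpt : ∀ θ : ℝ, Complex.normSq (u θ - v θ)
        ≤ Complex.normSq (u θ) - 2 * (conj' (u θ) * v θ).re
          + Complex.normSq (Fg (circleMap 0 ρ θ)) := by
      intro θ
      have h2 : Complex.normSq (u θ - v θ)
          = Complex.normSq (u θ) - 2 * (conj' (u θ) * v θ).re + Complex.normSq (v θ) := by
        rw [Complex.normSq_sub]
        have : (u θ * conj' (v θ)).re = (conj' (u θ) * v θ).re := by
          rw [← Complex.conj_re (u θ * conj' (v θ)), map_mul, Complex.conj_conj]
        rw [this]; ring
      rw [h2]
      have h3 : Complex.normSq (v θ) ≤ Complex.normSq (Fg (circleMap 0 ρ θ)) := by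
        rw [hv_def]
        simp only [Complex.normSq_mul]
        have hgle : Complex.normSq (g (circleMap 0 ρ θ)) ≤ 1 := by
          rw [Complex.normSq_eq_norm_sq]
          have := hg1 _ (hmem_1 ρ h0 h1 θ)
          nlinarith [norm_nonneg (g (circleMap 0 ρ θ))]
        nlinarith [Complex.normSq_nonneg (Fg (circleMap 0 ρ θ))]
      linarith
    have h0int : (0:ℝ) ≤ ∫ θ in (0:ℝ)..(2*Real.pi), Complex.normSq (u θ - v θ) :=
      intervalIntegral.integral_nonneg (by positivity) (fun θ _ => Complex.normSq_nonneg _)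
    have hmono : (∫ θ in (0:ℝ)..(2*Real.pi), Complex.normSq (u θ - v θ))
        ≤ ∫ θ in (0:ℝ)..(2*Real.pi), (Complex.normSq (u θ) - 2 * (conj' (u θ) * v θ).re
          + Complex.normSq (Fg (circleMap 0 ρ θ))) := by
      apply intervalIntegral.integral_mono_on (by positivity)
      · exact ((Complex.continuous_normSq.comp (hu_cont.sub hv_cont)).intervalIntegrable _ _)
      · apply Continuous.intervalIntegrable
        apply Continuous.add
        apply Continuous.sub (Complex.continuous_normSq.comp hu_cont)
        · exact (continuous_const.mul (Complex.continuous_re.comp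
            ((hu_cont.star).mul hv_cont)))
        · exact Complex.continuous_normSq.comp (hFg_circ ρ h0 h1.le)
      · exact fun θ _ => hpt θ
    have hsplit : (∫ θ in (0:ℝ)..(2*Real.pi), (Complex.normSq (u θ)
          - 2 * (conj' (u θ) * v θ).re + Complex.normSq (Fg (circleMap 0 ρ θ))))
        = D ρ - 2 * (∫ θ in (0:ℝ)..(2*Real.pi), conj' (u θ) * v θ).re + N ρ := by
      rw [intervalIntegral.integral_add, intervalIntegral.integral_sub]
      · have hre : (∫ θ in (0:ℝ)..(2*Real.pi), (conj' (u θ) * v θ).re)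
            = (∫ θ in (0:ℝ)..(2*Real.pi), conj' (u θ) * v θ).re := by
          have := Complex.reCLM.intervalIntegral_comp_comm hcv_int
          simpa using this
        rw [intervalIntegral.integral_const_mul, hre, hD_def, hN_def]
      · exact (Complex.continuous_normSq.comp hu_cont).intervalIntegrable _ _
      · exact (continuous_const.mul (Complex.continuous_re.comp
          ((hu_cont.star).mul hv_cont))).intervalIntegrable _ _
      · exact ((Complex.continuous_normSq.comp hu_cont).sub
          (continuous_const.mul (Complex.continuous_re.comp
            ((hu_cont.star).mul hv_cont)))).intervalIntegrable _ _
      · exact (Complex.continuous_normSq.comp (hFg_circ ρ h0 h1.le)).intervalIntegrable _ _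
    linarith [le_trans h0int (le_of_le_of_eq hmono hsplit)]
  -- the approximating sequence of radii
  set ρseq : ℕ → ℝ := fun k => 1 - 1/(k+2) with hρseq_def
  have hρ0k : ∀ k, 0 < ρseq k := by
    intro k
    have : 1/((k:ℝ)+2) ≤ 1/2 := by
      apply div_le_div_of_nonneg_left (by norm_num) (by norm_num) (by exact_mod_cast by omega)
    simp only [hρseq_def]
    linarith
  have hρ1k : ∀ k, ρseq k < 1 := by
    intro k
    have : 0 < 1/((k:ℝ)+2) := by positivity
    simp only [hρseq_def]
    linarith
  have htend : Tendsto ρseq atTop (𝓝 1) := by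
    have h1 : Tendsto (fun k : ℕ => 1/((k:ℝ)+2)) atTop (𝓝 0) := by
      simp only [one_div]
      apply Tendsto.comp tendsto_inv_atTop_zero
      apply tendsto_atTop_add_const_right
      exact tendsto_natCast_atTop_atTop
    have h2 : Tendsto (fun k : ℕ => 1 - 1/((k:ℝ)+2)) atTop (𝓝 (1 - 0)) :=
      Tendsto.sub tendsto_const_nhds h1
    rw [hρseq_def]
    simpa using h2
  -- tendsto of circleMap in the radius
  have hcirc_tend : ∀ θ : ℝ, Tendsto (fun k => circleMap 0 (ρseq k) θ) atTop
      (𝓝 (circleMap 0 1 θ)) := by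
    intro θ
    have hc : Continuous fun R : ℝ => circleMap 0 R θ := by
      simp only [circleMap]
      exact continuous_const.add (Complex.continuous_ofReal.mul continuous_const)
    exact (hc.tendsto 1).comp htend
  -- dominated convergence for D and N
  have hDCT : ∀ F : ℂ → ℂ, ContinuousOn F (ball 0 s) →
      Tendsto (fun k => ∫ θ in (0:ℝ)..(2*Real.pi), Complex.normSq (F (circleMap 0 (ρseq k) θ)))
        atTop (𝓝 (∫ θ in (0:ℝ)..(2*Real.pi), Complex.normSq (F (circleMap 0 1 θ)))) := by
    intro F hF
    obtain ⟨C, hC⟩ := (isCompact_closedBall (0:ℂ) 1).exists_bound_of_continuousOn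
      (Complex.continuous_normSq.comp_continuousOn (hF.mono hsub1s))
    apply intervalIntegral.tendsto_integral_filter_of_dominated_convergence (bound := fun _ => C)
    · apply Filter.Eventually.of_forall
      intro k
      exact ((Complex.continuous_normSq.comp (hF.comp_continuous (continuous_circleMap 0 (ρseq k))
        (fun θ => hsub1s (hmem_s _ (hρ0k k) (hρ1k k).le θ)))).aestronglyMeasurable)
    · apply Filter.Eventually.of_forall
      intro k
      apply MeasureTheory.ae_of_all
      intro θ _
      exact hC _ (hmem_s _ (hρ0k k) (hρ1k k).le θ)
    · exact intervalIntegrable_const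
    · apply MeasureTheory.ae_of_all
      intro θ _
      have h1 : Tendsto (fun k => F (circleMap 0 (ρseq k) θ)) atTop (𝓝 (F (circleMap 0 1 θ))) := by
        have := (hF.continuousAt (isOpen_ball.mem_nhds
          (hsub1s (hmem_s 1 one_pos le_rfl θ)))).tendsto
        exact this.comp (hcirc_tend θ)
      exact (Complex.continuous_normSq.tendsto _).comp h1
  have hDlim : Tendsto (fun k => D (ρseq k)) atTop (𝓝 (D 1)) := hDCT Fc hFc_cont
  have hNlim : Tendsto (fun k => N (ρseq k)) atTop (𝓝 (N 1)) := hDCT Fg hFg_cont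
  -- limit of the cross term
  set Z : ℂ := (2*Real.pi:ℝ) * ∑ i, c i * (g (lam i) * Fg (lam i)) with hZ_def
  have hXlim : Tendsto (fun k => ((2*Real.pi:ℝ):ℂ) * ∑ i, c i * (g ((((ρseq k:ℝ):ℂ))^2 * lam i) * Fg ((((ρseq k:ℝ):ℂ))^2 * lam i))) atTop (𝓝 Z) := by
    rw [hZ_def]
    apply Tendsto.const_mul
    apply tendsto_finset_sum
    intro i _
    apply Tendsto.const_mul
    have hpt : Tendsto (fun k => (((ρseq k:ℝ):ℂ))^2 * lam i) atTop (𝓝 (lam i)) := by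
      have h1 : Tendsto (fun k => ((ρseq k:ℝ):ℂ)) atTop (𝓝 1) :=
        (Complex.continuous_ofReal.tendsto 1).comp htend
      have := (h1.pow 2).mul_const (lam i)
      simpa using this
    exact Tendsto.mul
      (((hg.continuousOn.continuousAt (isOpen_ball.mem_nhds (hlam_mem i))).tendsto).comp hpt)
      (((hFg_cont.continuousAt (isOpen_ball.mem_nhds (hball1s (hlam_mem i)))).tendsto).comp hpt)
  -- realness of the diagonal integrals
  have hreal : ∀ F : ℂ → ℂ,
      (∫ θ in (0:ℝ)..(2*Real.pi), conj' (F (circleMap 0 1 θ)) * F (circleMap 0 1 θ))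
        = ((∫ θ in (0:ℝ)..(2*Real.pi), Complex.normSq (F (circleMap 0 1 θ)) : ℝ) : ℂ) := by
    intro F
    rw [intervalIntegral.integral_congr (g := fun θ =>
        ((Complex.normSq (F (circleMap 0 1 θ)) : ℝ) : ℂ))
      (fun θ _ => by rw [mul_comm, Complex.mul_conj]),
      intervalIntegral.integral_ofReal]
  have hD1_real : (∫ θ in (0:ℝ)..(2*Real.pi),
      conj' (Fc (circleMap 0 1 θ)) * Fc (circleMap 0 1 θ)) = ((D 1 : ℝ) : ℂ) := hreal Fc
  have hN1_real : (∫ θ in (0:ℝ)..(2*Real.pi),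
      conj' (Fg (circleMap 0 1 θ)) * Fg (circleMap 0 1 θ)) = ((N 1 : ℝ) : ℂ) := hreal Fg
  have hNZ : Z = ((N 1 : ℝ) : ℂ) := by
    rw [hZ_def, ← hN1_real, hNc]
    congr 1
    refine Finset.sum_congr rfl fun i _ => by ring
  have hNZre : Z.re = N 1 := by rw [hNZ]; exact Complex.ofReal_re _
  -- pass to the limit
  have hineq_seq : ∀ k, 0 ≤ D (ρseq k) - 2 * ((((2*Real.pi:ℝ)):ℂ) * ∑ i, c i *
      (g (((ρseq k:ℝ):ℂ)^2 * lam i) * Fg (((ρseq k:ℝ):ℂ)^2 * lam i))).re + N (ρseq k) :=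
    fun k => key_ineq _ (hρ0k k) (hρ1k k)
  have hlim_total : Tendsto (fun k => D (ρseq k) - 2 * ((((2*Real.pi:ℝ)):ℂ) * ∑ i, c i *
      (g (((ρseq k:ℝ):ℂ)^2 * lam i) * Fg (((ρseq k:ℝ):ℂ)^2 * lam i))).re + N (ρseq k))
      atTop (𝓝 (D 1 - 2 * Z.re + N 1)) := by
    apply Tendsto.add _ hNlim
    apply Tendsto.sub hDlim
    exact (((Complex.continuous_re.tendsto Z).comp hXlim).const_mul 2)
  have hD1N1 : 0 ≤ D 1 - N 1 := by
    have := ge_of_tendsto' hlim_total hineq_seq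
    rw [hNZre] at this
    linarith
  -- final algebraic identification
  have expand : ∀ i, c i * Fc (lam i) - (c i * g (lam i)) * Fg (lam i)
      = ∑ j, conj' (c j) * c i *
          ((1 - conj' (g (lam j)) * g (lam i)) / (1 - conj' (lam j) * lam i)) := by
    intro i
    rw [hFc_def, hFg_def]
    simp only
    rw [Finset.mul_sum, Finset.mul_sum, ← Finset.sum_sub_distrib]
    refine Finset.sum_congr rfl fun j _ => ?_
    rw [map_mul, div_eq_mul_inv]
    ring
  have hsum_eq : (((2*Real.pi:ℝ)):ℂ) * (∑ i, ∑ j, conj' (c i) * c j *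
        ((1 - conj' (g (lam i)) * g (lam j)) / (1 - conj' (lam i) * lam j)))
      = ((D 1:ℝ):ℂ) - ((N 1:ℝ):ℂ) := by
    rw [← hD1_real, ← hN1_real, hDc, hNc]
    rw [← mul_sub, ← Finset.sum_sub_distrib]
    rw [Finset.sum_comm]
    congr 1
    refine Finset.sum_congr rfl fun i _ => ?_
    rw [expand i]
  have h2π : (((2*Real.pi:ℝ)):ℂ) ≠ 0 := by
    simp [Real.pi_ne_zero]
  have hfinal : (∑ i, ∑ j, conj' (c i) * c j *
        ((1 - conj' (g (lam i)) * g (lam j)) / (1 - conj' (lam i) * lam j)))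
      = (((D 1 - N 1) / (2*Real.pi) : ℝ) : ℂ) := by
    rw [eq_comm, Complex.ofReal_div, div_eq_iff h2π, Complex.ofReal_sub, eq_comm, mul_comm]
    exact hsum_eq
  rw [hfinal]
  rw [Complex.zero_le_real]
  positivity

end Pick

lemma gram (M : Matrix (Fin n) (Fin n) ℂ) (hherm : M.IsHermitian)
    (hpsd : ∀ x : Fin n → ℂ, 0 ≤ ∑ i, ∑ j, conj' (x i) * x j * M i j) :
    ∃ V : Matrix (Fin n) (Fin n) ℂ, ∀ i j, M i j = ∑ k, conj' (V k i) * V k j := by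
  have hps : M.PosSemidef := by
    refine Matrix.PosSemidef.of_dotProduct_mulVec_nonneg hherm fun x => ?_
    have : dotProduct (star x) (M.mulVec x) = ∑ i, ∑ j, conj' (x i) * x j * M i j := by
      simp only [dotProduct, Matrix.mulVec, Pi.star_apply, Finset.mul_sum]
      refine Finset.sum_congr rfl fun i _ => Finset.sum_congr rfl fun j _ => ?_
      simp only [RCLike.star_def]
      ring
    rw [this]
    exact hpsd x
  obtain ⟨B, hB⟩ : ∃ B : Matrix (Fin n) (Fin n) ℂ, M = B.conjTranspose * B := by
    classical
    open scoped MatrixOrder Matrix.Norms.L2Operator in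
    obtain ⟨B, hB⟩ := CStarAlgebra.nonneg_iff_eq_star_mul_self.mp hps.nonneg
    exact ⟨B, by rw [hB, Matrix.star_eq_conjTranspose]⟩
  refine ⟨B, fun i j => ?_⟩
  rw [hB, Matrix.mul_apply]
  refine Finset.sum_congr rfl fun k _ => ?_
  rw [Matrix.conjTranspose_apply]
  simp [RCLike.star_def]

lemma schur (A : Fin n → Fin n → ℂ)
    (hA : ∀ x : Fin n → ℂ, 0 ≤ ∑ i, ∑ j, conj' (x i) * x j * A i j)
    (V : Matrix (Fin n) (Fin n) ℂ) (c : Fin n → ℂ) :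
    0 ≤ ∑ i, ∑ j, conj' (c i) * c j * (A i j * (∑ k, conj' (V k i) * V k j)) := by
  have hrw : (∑ i, ∑ j, conj' (c i) * c j * (A i j * (∑ k, conj' (V k i) * V k j)))
      = ∑ k, ∑ i, ∑ j, conj' (c i * V k i) * (c j * V k j) * A i j := by
    calc (∑ i, ∑ j, conj' (c i) * c j * (A i j * (∑ k, conj' (V k i) * V k j)))
        = ∑ i, ∑ j, ∑ k, conj' (c i * V k i) * (c j * V k j) * A i j := by
          refine Finset.sum_congr rfl fun i _ => Finset.sum_congr rfl fun j _ => ?_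
          rw [Finset.mul_sum, Finset.mul_sum]
          refine Finset.sum_congr rfl fun k _ => ?_
          rw [map_mul]
          ring
      _ = ∑ i, ∑ k, ∑ j, conj' (c i * V k i) * (c j * V k j) * A i j :=
          Finset.sum_congr rfl fun i _ => Finset.sum_comm
      _ = ∑ k, ∑ i, ∑ j, conj' (c i * V k i) * (c j * V k j) * A i j := Finset.sum_comm
  rw [hrw]
  exact Finset.sum_nonneg fun k _ => hA fun i => c i * V k i


/-- If `f` is bounded holomorphic with `1 < |f| ≤ √2` on the disk, then both kernels
`K₁` and `K₂` are positive semi-definite. -/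
theorem psd_pair_of_annulus_valued
    (f : ℂ → ℂ) (hf : DifferentiableOn ℂ f (ball (0 : ℂ) 1))
    (hb : ∃ M : ℝ, ∀ z ∈ ball (0 : ℂ) 1, ‖f z‖ ≤ M)
    (hA : ∀ lam ∈ ball (0 : ℂ) 1,
        1 < ‖f lam‖ ∧ ‖f lam‖ ≤ Real.sqrt 2) :
    IsPSDKernelOnDisk (fun lam z =>
        (2 * (starRingEnd ℂ) (f lam) * f z - ((starRingEnd ℂ) (f lam)) ^ 2 * (f z) ^ 2) /
          (1 - (starRingEnd ℂ) lam * z) ^ 2) ∧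
      IsPSDKernelOnDisk (fun lam z =>
        (1 - 2 * (starRingEnd ℂ) (f lam) * f z + ((starRingEnd ℂ) (f lam)) ^ 2 * (f z) ^ 2) /
          (1 - (starRingEnd ℂ) lam * z) ^ 2) := by
  have hsqrt2 : (0:ℝ) < Real.sqrt 2 := by positivity
  have h02 : (0:ℂ) ≤ 2 := by
    rw [show (2:ℂ) = ((2:ℝ):ℂ) by norm_num]
    exact Complex.zero_le_real.2 (by norm_num)
  constructor
  · intro n lam hlam c
    simp only
    have hden : ∀ i j, (1:ℂ) - conj' (lam i) * lam j ≠ 0 := by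
      intro i j h
      have h1 : ‖conj' (lam i) * lam j‖ < 1 := by
        rw [norm_mul, Complex.norm_conj]
        nlinarith [hlam i, hlam j, norm_nonneg (lam i), norm_nonneg (lam j)]
      have h2 : conj' (lam i) * lam j = 1 := by linear_combination -h
      rw [h2] at h1; simp at h1
    set g : ℂ → ℂ := fun z => f z / ((Real.sqrt 2 : ℝ) : ℂ) with hg_def
    have hg_diff : DifferentiableOn ℂ g (ball 0 1) := hf.div_const _
    have hg1 : ∀ z ∈ ball (0:ℂ) 1, ‖g z‖ ≤ 1 := by
      intro z hz
      rw [hg_def]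
      simp only [norm_div, Complex.norm_real, Real.norm_eq_abs, abs_of_pos hsqrt2]
      rw [div_le_one hsqrt2]
      exact (hA z hz).2
    set P : Fin n → Fin n → ℂ := fun i j =>
      (1 - conj' (g (lam i)) * g (lam j)) / (1 - conj' (lam i) * lam j) with hP_def
    have hPpsd : ∀ x : Fin n → ℂ, 0 ≤ ∑ i, ∑ j, conj' (x i) * x j * P i j :=
      fun x => pick_form hg_diff hg1 hlam
    set Sm : Matrix (Fin n) (Fin n) ℂ := Matrix.of fun i j =>
      ((1:ℂ) - conj' (lam i) * lam j)⁻¹ with hSm_def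
    have hSmherm : Sm.IsHermitian := by
      rw [Matrix.IsHermitian]
      ext i j
      rw [Matrix.conjTranspose_apply, hSm_def]
      simp only [Matrix.of_apply, RCLike.star_def, map_inv₀, map_sub, map_one, map_mul,
        Complex.conj_conj]
      rw [mul_comm]
    have hSmpsd : ∀ x : Fin n → ℂ, 0 ≤ ∑ i, ∑ j, conj' (x i) * x j * Sm i j := by
      intro x
      have := pick_form (g := fun _ => (0:ℂ)) (differentiableOn_const 0)
        (by intro z hz; simp) hlam (c := x)
      simpa [hSm_def, one_div] using this
    obtain ⟨W, hW⟩ := gram Sm hSmherm hSmpsd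
    have hform := schur P hPpsd W (fun i => c i * f (lam i))
    have h2 : ((Real.sqrt 2 : ℝ) : ℂ) * ((Real.sqrt 2 : ℝ) : ℂ) = 2 := by
      rw [← Complex.ofReal_mul, Real.mul_self_sqrt (by norm_num)]
      norm_num
    have hrw : (∑ i, ∑ j, conj' (c i) * c j *
        ((2 * conj' (f (lam i)) * f (lam j) - conj' (f (lam i))^2 * (f (lam j))^2)
          / (1 - conj' (lam i) * lam j)^2))
        = 2 * ∑ i, ∑ j, conj' ((fun i => c i * f (lam i)) i) * ((fun i => c i * f (lam i)) j)
            * (P i j * (∑ k, conj' (W k i) * W k j)) := by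
      rw [Finset.mul_sum]
      refine Finset.sum_congr rfl fun i _ => ?_
      rw [Finset.mul_sum]
      refine Finset.sum_congr rfl fun j _ => ?_
      rw [← hW i j, hP_def, hSm_def, hg_def]
      simp only [Matrix.of_apply, map_mul, map_div₀, Complex.conj_ofReal]
      rw [div_mul_div_comm, h2]
      field_simp [hden i j]
    rw [hrw]
    exact mul_nonneg h02 hform
  · intro n lam hlam c
    simp only
    have hden : ∀ i j, (1:ℂ) - conj' (lam i) * lam j ≠ 0 := by
      intro i j h
      have h1 : ‖conj' (lam i) * lam j‖ < 1 := by
        rw [norm_mul, Complex.norm_conj]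
        nlinarith [hlam i, hlam j, norm_nonneg (lam i), norm_nonneg (lam j)]
      have h2 : conj' (lam i) * lam j = 1 := by linear_combination -h
      rw [h2] at h1; simp at h1
    have hlam_mem : ∀ i, lam i ∈ ball (0:ℂ) 1 := fun i =>
      mem_ball_zero_iff.2 (by exact hlam i)
    have hfne : ∀ z ∈ ball (0:ℂ) 1, f z ≠ 0 := by
      intro z hz h0
      have := (hA z hz).1
      rw [h0, norm_zero] at this; linarith
    set g : ℂ → ℂ := fun z => (f z)⁻¹ with hg_def
    have hg_diff : DifferentiableOn ℂ g (ball 0 1) := hf.inv hfne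
    have hg1 : ∀ z ∈ ball (0:ℂ) 1, ‖g z‖ ≤ 1 := by
      intro z hz
      rw [hg_def]
      simp only [norm_inv]
      have h1 := (hA z hz).1
      rw [inv_le_one_iff₀]
      right; exact h1.le
    set P : Matrix (Fin n) (Fin n) ℂ := Matrix.of fun i j =>
      (1 - conj' (g (lam i)) * g (lam j)) / (1 - conj' (lam i) * lam j) with hP_def
    have hPpsd : ∀ x : Fin n → ℂ, 0 ≤ ∑ i, ∑ j, conj' (x i) * x j * P i j := by
      intro x
      have := pick_form hg_diff hg1 hlam (c := x)
      simpa [hP_def] using this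
    have hPherm : P.IsHermitian := by
      rw [Matrix.IsHermitian]
      ext i j
      rw [Matrix.conjTranspose_apply, hP_def]
      simp only [Matrix.of_apply, RCLike.star_def, map_div₀, map_sub, map_one, map_mul,
        Complex.conj_conj]
      rw [mul_comm (g (lam j)) (conj' (g (lam i))), mul_comm (lam j) (conj' (lam i))]
    obtain ⟨V, hV⟩ := gram P hPherm hPpsd
    have hform := schur (fun i j => P i j) hPpsd V (fun i => c i * (f (lam i))^2)
    have hrw : (∑ i, ∑ j, conj' (c i) * c j *
        ((1 - 2 * conj' (f (lam i)) * f (lam j) + conj' (f (lam i))^2 * (f (lam j))^2)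
          / (1 - conj' (lam i) * lam j)^2))
        = ∑ i, ∑ j, conj' ((fun i => c i * (f (lam i))^2) i) * ((fun i => c i * (f (lam i))^2) j)
            * (P i j * (∑ k, conj' (V k i) * V k j)) := by
      refine Finset.sum_congr rfl fun i _ => Finset.sum_congr rfl fun j _ => ?_
      rw [← hV i j, hP_def, hg_def]
      simp only [Matrix.of_apply, map_mul, map_inv₀, map_pow]
      have hfi : conj' (f (lam i)) ≠ 0 := by
        simp only [ne_eq, map_eq_zero]
        exact hfne _ (hlam_mem i)
      have hfj : f (lam j) ≠ 0 := hfne _ (hlam_mem j)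
      field_simp [hden i j]
      ring
    rw [hrw]
    exact hform
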